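/- For every n ≥ 1, the left-nested self-application Sₗ^{2n+1} of the combinator S = λx.λy.λz. x z (y z) is βη-equal to λx.λy. (x y)^n (λz. x z (y z)), where (x y)^n denotes n-fold application of x y. In particular S does not have the ρ-property (the normal forms of Sₗ^k for odd k are pairwise distinct). -/

import Mathlib

/-- Untyped lambda terms in de Bruijn representation. -/
inductive Lam : Type
  | var : Nat → Lam
  | app : Lam → Lam → Lam
  | lam : Lam → Lam
  deriving DecidableEq

namespace Lam

/-- Shift free variables `≥ d` up by one. -/
def lift (d : Nat) : Lam → Lam
  | var n => var (if n < d then n else n + 1)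
  | app a b => app (lift d a) (lift d b)
  | lam a => lam (lift (d + 1) a)

/-- Substitute `s` for variable `d` (and lower the variables above `d`). -/
def subst (d : Nat) (s : Lam) : Lam → Lam
  | var n => if n = d then s else if d < n then var (n - 1) else var n
  | app a b => app (subst d s a) (subst d s b)
  | lam a => lam (subst (d + 1) (lift 0 s) a)

/-- βη-equivalence of lambda terms. -/
inductive BetaEta : Lam → Lam → Prop
  | beta (t s : Lam) : BetaEta (app (lam t) s) (subst 0 s t)
  | eta (t : Lam) : BetaEta (lam (app (lift 0 t) (var 0))) t
  | refl (t : Lam) : BetaEta t t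
  | symm {t s : Lam} : BetaEta t s → BetaEta s t
  | trans {t s u : Lam} : BetaEta t s → BetaEta s u → BetaEta t u
  | congApp {t t' s s' : Lam} : BetaEta t t' → BetaEta s s' →
      BetaEta (app t s) (app t' s')
  | congLam {t t' : Lam} : BetaEta t t' → BetaEta (lam t) (lam t')

/-- The B combinator `λf.λg.λx. f (g x)`. -/
def B : Lam := lam (lam (lam (app (var 2) (app (var 1) (var 0)))))

/-- Left-nested self-application `X X ... X` with `k` copies (for `k ≥ 1`). -/
def sapp (X : Lam) : Nat → Lam
  | 0 => X
  | 1 => X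
  | k + 2 => app (sapp X (k + 1)) X

end Lam

namespace Lam

/-- S = λx.λy.λz. x z (y z) -/
def S : Lam := lam (lam (lam (app (app (var 2) (var 0)) (app (var 1) (var 0)))))

/-- n-fold application: npow e n a = e (e (... (e a))) -/
def npow (e : Lam) : Nat → Lam → Lam
  | 0, a => a
  | n + 1, a => app e (npow e n a)

theorem lift_lift (t : Lam) : ∀ d e, d ≤ e → lift d (lift e t) = lift (e+1) (lift d t) := by
  induction t with
  | var n =>
    intro d e h
    simp only [lift, Lam.var.injEq]
    split_ifs <;> omega
  | app a b iha ihb => intro d e h; simp only [lift, iha d e h, ihb d e h]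
  | lam a ih => intro d e h; simp only [lift, ih (d+1) (e+1) (by omega)]

theorem subst_lift_self (t : Lam) : ∀ d s, subst d s (lift d t) = t := by
  induction t with
  | var n =>
    intro d s
    simp only [lift, subst]
    split_ifs <;> first | omega | (simp only [Lam.var.injEq] <;> omega)
  | app a b iha ihb => intro d s; simp only [lift, subst, iha, ihb]
  | lam a ih => intro d s; simp only [lift, subst, ih]

theorem lift_subst (t : Lam) : ∀ d e s, d ≤ e →
    lift d (subst e s t) = subst (e+1) (lift d s) (lift d t) := by
  induction t with
  | var n =>
    intro d e s h
    simp only [subst, lift]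
    split_ifs <;> (try simp only [lift, subst]) <;> (try split_ifs) <;>
        first | rfl | omega | (simp only [Lam.var.injEq] <;> omega)
  | app a b iha ihb => intro d e s h; simp only [lift, subst, iha _ _ _ h, ihb _ _ _ h]
  | lam a ih =>
    intro d e s h
    simp only [lift, subst, ih (d+1) (e+1) (lift 0 s) (by omega), lift_lift s 0 d (by omega)]

theorem lift_subst_hi (t : Lam) : ∀ d e s, e ≤ d →
    lift d (subst e s t) = subst e (lift d s) (lift (d+1) t) := by
  induction t with
  | var n =>
    intro d e s h
    simp only [subst, lift]
    split_ifs <;> (try simp only [lift, subst]) <;> (try split_ifs) <;>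
        first | rfl | omega | (simp only [Lam.var.injEq] <;> omega)
  | app a b iha ihb => intro d e s h; simp only [lift, subst, iha _ _ _ h, ihb _ _ _ h]
  | lam a ih =>
    intro d e s h
    simp only [lift, subst, ih (d+1) (e+1) (lift 0 s) (by omega), lift_lift s 0 d (by omega)]

theorem subst_subst (t : Lam) : ∀ d e s s', d ≤ e →
    subst e s' (subst d s t) =
      subst d (subst e s' s) (subst (e+1) (lift d s') t) := by
  induction t with
  | var n =>
    intro d e s s' h
    simp only [subst]
    split_ifs <;> (try simp only [subst, subst_lift_self]) <;> (try split_ifs) <;>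
        first | rfl | omega | (simp only [Lam.var.injEq] <;> omega)
  | app a b iha ihb => intro d e s s' h; simp only [subst, iha _ _ _ _ h, ihb _ _ _ _ h]
  | lam a ih =>
    intro d e s s' h
    simp only [subst, ih (d+1) (e+1) (lift 0 s) (lift 0 s') (by omega),
      lift_subst s 0 e s' (by omega), lift_lift s' 0 d (by omega)]

theorem subst_var_lift (t : Lam) : ∀ d, subst d (var d) (lift (d+1) t) = t := by
  induction t with
  | var n =>
    intro d
    simp only [lift, subst]
    split_ifs <;> first | omega | (simp only [Lam.var.injEq] <;> omega)
  | app a b iha ihb => intro d; simp only [lift, subst, iha, ihb]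
  | lam a ih =>
    intro d
    simp only [lift, subst]
    rw [if_neg (Nat.not_lt_zero d), ih]


def size : Lam → Nat
  | var _ => 1
  | app a b => size a + size b + 1
  | lam a => size a + 1

theorem size_lift (t : Lam) : ∀ d, size (lift d t) = size t := by
  induction t with
  | var n => intro d; simp [lift, size]
  | app a b iha ihb => intro d; simp [lift, size, iha, ihb]
  | lam a ih => intro d; simp [lift, size, ih]

/-- inverse of lift -/
def drop (d : Nat) : Lam → Option Lam
  | var n => if n = d then none else if n < d then some (var n) else some (var (n-1))
  | app a b => do pure (app (← drop d a) (← drop d b))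
  | lam a => do pure (lam (← drop (d+1) a))

theorem drop_lift (t : Lam) : ∀ d, drop d (lift d t) = some t := by
  induction t with
  | var n =>
    intro d
    simp only [lift, drop]
    split_ifs <;> first | omega | (simp only [Option.some.injEq, Lam.var.injEq] <;> omega)
  | app a b iha ihb => intro d; simp [lift, drop, iha, ihb]
  | lam a ih => intro d; simp [lift, drop, ih]

theorem drop_some {t u : Lam} : ∀ d, drop d t = some u → t = lift d u := by
  induction t generalizing u with
  | var n =>
    intro d h
    simp only [drop] at h
    split_ifs at h with h1 h2 <;>
      first
        | exact Option.noConfusion h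
        | (cases h; simp only [lift, Lam.var.injEq]; split_ifs <;> omega)
  | app a b iha ihb =>
    intro d h
    simp only [drop, bind, Option.bind_eq_bind, Option.bind_eq_some_iff, Option.pure_def,
      Option.some.injEq] at h
    obtain ⟨a', ha, b', hb, rfl⟩ := h
    simp_all [lift]
    exact ⟨iha _ ha, ihb _ hb⟩
  | lam a ih =>
    intro d h
    simp only [drop, bind, Option.bind_eq_bind, Option.bind_eq_some_iff, Option.pure_def,
      Option.some.injEq] at h
    obtain ⟨a', ha, rfl⟩ := h
    simp_all [lift]
    exact ih _ ha

theorem lift_eq_lift {f : Lam} : ∀ {r : Lam} {d e : Nat}, e ≤ d →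
    lift (d+1) f = lift e r → ∃ g, f = lift e g ∧ r = lift d g := by
  induction f with
  | var n =>
    intro r d e he h
    cases r with
    | var k =>
      simp only [lift, Lam.var.injEq] at h
      refine ⟨var (if n < e then n else n - 1), ?_, ?_⟩ <;>
        simp only [lift, Lam.var.injEq] <;> split_ifs at * <;> omega
    | app x y => simp [lift] at h
    | lam x => simp [lift] at h
  | app a b iha ihb =>
    intro r d e he h
    cases r with
    | var k => simp [lift] at h
    | app x y =>
      simp only [lift, Lam.app.injEq] at h
      obtain ⟨g1, hg1, hx⟩ := iha he h.1
      obtain ⟨g2, hg2, hy⟩ := ihb he h.2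
      exact ⟨app g1 g2, by simp [lift, hg1, hg2], by simp [lift, hx, hy]⟩
    | lam x => simp [lift] at h
  | lam a ih =>
    intro r d e he h
    cases r with
    | var k => simp [lift] at h
    | app x y => simp [lift] at h
    | lam x =>
      simp only [lift, Lam.lam.injEq] at h
      obtain ⟨g, hg, hx⟩ := ih (by omega : e+1 ≤ d+1) h
      exact ⟨lam g, by simp [lift, hg], by simp [lift, hx]⟩

theorem drop_lift_comm (f : Lam) (d : Nat) :
    drop 0 (lift (d+1) f) = (drop 0 f).map (lift d) := by
  cases h : drop 0 f with
  | some g =>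
    have := drop_some 0 h
    subst this
    rw [← lift_lift g 0 d (by omega), drop_lift]
    rfl
  | none =>
    cases h2 : drop 0 (lift (d+1) f) with
    | none => rfl
    | some u =>
      exfalso
      obtain ⟨g, hg, -⟩ := lift_eq_lift (Nat.zero_le d) (drop_some 0 h2)
      rw [hg, drop_lift] at h
      exact nomatch h

/-- Parallel beta-eta reduction. -/
inductive Par : Lam → Lam → Prop
  | var (n : Nat) : Par (var n) (var n)
  | congApp {a a' b b' : Lam} : Par a a' → Par b b' → Par (app a b) (app a' b')
  | congLam {a a' : Lam} : Par a a' → Par (lam a) (lam a')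
  | beta {t t' s s' : Lam} : Par t t' → Par s s' → Par (app (lam t) s) (subst 0 s' t')
  | eta {t t' : Lam} : Par t t' → Par (lam (app (lift 0 t) (var 0))) t'

theorem par_refl (t : Lam) : Par t t := by
  induction t with
  | var n => exact Par.var n
  | app a b iha ihb => exact Par.congApp iha ihb
  | lam a ih => exact Par.congLam ih

theorem par_lift {t u : Lam} (h : Par t u) : ∀ d, Par (lift d t) (lift d u) := by
  induction h with
  | var n => intro d; exact par_refl _
  | congApp h1 h2 ih1 ih2 => intro d; exact Par.congApp (ih1 d) (ih2 d)
  | congLam h1 ih1 => intro d; exact Par.congLam (ih1 (d+1))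
  | beta h1 h2 ih1 ih2 =>
    intro d
    rw [show ∀ a b, lift d (app (lam a) b) = app (lam (lift (d+1) a)) (lift d b) from
      fun _ _ => rfl, lift_subst_hi _ _ _ _ (Nat.zero_le d)]
    exact Par.beta (ih1 (d+1)) (ih2 d)
  | eta h1 ih1 =>
    intro d
    rw [show ∀ a, lift d (lam (app a (var 0))) = lam (app (lift (d+1) a) (var 0)) from
      fun _ => by simp [lift], ← lift_lift _ 0 d (Nat.zero_le d)]
    exact Par.eta (ih1 d)

theorem par_subst {a a' : Lam} (h : Par a a') :
    ∀ d {s s'}, Par s s' → Par (subst d s a) (subst d s' a') := by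
  induction h with
  | var n =>
    intro d s s' hs
    simp only [subst]
    split_ifs <;> first | exact hs | exact par_refl _
  | congApp h1 h2 ih1 ih2 => intro d s s' hs; exact Par.congApp (ih1 d hs) (ih2 d hs)
  | congLam h1 ih1 => intro d s s' hs; exact Par.congLam (ih1 (d+1) (par_lift hs 0))
  | @beta t t' b b' h1 h2 ih1 ih2 =>
    intro d s s' hs
    have : subst d s' (subst 0 b' t') =
        subst 0 (subst d s' b') (subst (d+1) (lift 0 s') t') :=
      subst_subst t' 0 d b' s' (Nat.zero_le d)
    rw [show subst d s (app (lam t) b) = app (lam (subst (d+1) (lift 0 s) t)) (subst d s b)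
      from rfl, this]
    exact Par.beta (ih1 (d+1) (par_lift hs 0)) (ih2 d hs)
  | @eta t t' h1 ih1 =>
    intro d s s' hs
    have e1 : subst d s (lam (app (lift 0 t) (var 0))) =
        lam (app (lift 0 (subst d s t)) (var 0)) := by
      simp only [subst, lift_subst t 0 d s (Nat.zero_le d)]
      norm_num [subst]
    rw [e1]
    exact Par.eta (ih1 d hs)

theorem par_lift_inv {x u : Lam} (h : Par x u) :
    ∀ d t, x = lift d t → ∃ u', u = lift d u' ∧ Par t u' := by
  induction h with
  | var n =>
    intro d t ht
    exact ⟨t, ht, par_refl t⟩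
  | @congApp a a' b b' h1 h2 ih1 ih2 =>
    intro d t ht
    cases t with
    | var k => simp [lift] at ht
    | lam x => simp [lift] at ht
    | app x y =>
      simp only [lift, Lam.app.injEq] at ht
      obtain ⟨u1, rfl, hu1⟩ := ih1 d x ht.1
      obtain ⟨u2, rfl, hu2⟩ := ih2 d y ht.2
      exact ⟨app u1 u2, rfl, Par.congApp hu1 hu2⟩
  | @congLam a a' h1 ih1 =>
    intro d t ht
    cases t with
    | var k => simp [lift] at ht
    | app x y => simp [lift] at ht
    | lam x =>
      simp only [lift, Lam.lam.injEq] at ht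
      obtain ⟨u1, rfl, hu1⟩ := ih1 (d+1) x ht
      exact ⟨lam u1, rfl, Par.congLam hu1⟩
  | @beta t1 t1' s1 s1' h1 h2 ih1 ih2 =>
    intro d t ht
    cases t with
    | var k => simp [lift] at ht
    | lam x => simp [lift] at ht
    | app x y =>
      simp only [lift, Lam.app.injEq] at ht
      obtain ⟨hx, hy⟩ := ht
      cases x with
      | var k => simp [lift] at hx
      | app p q => simp [lift] at hx
      | lam p =>
        simp only [lift, Lam.lam.injEq] at hx
        obtain ⟨u1, rfl, hu1⟩ := ih1 (d+1) p hx
        obtain ⟨u2, rfl, hu2⟩ := ih2 d y hy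
        exact ⟨subst 0 u2 u1, (lift_subst_hi u1 d 0 u2 (Nat.zero_le d)).symm,
          Par.beta hu1 hu2⟩
  | @eta r r' h1 ih1 =>
    intro d t ht
    cases t with
    | var k => simp [lift] at ht
    | app x y => simp [lift] at ht
    | lam x =>
      simp only [lift, Lam.lam.injEq] at ht
      cases x with
      | var k => simp [lift] at ht
      | lam p => simp [lift] at ht
      | app p q =>
        simp only [lift, Lam.app.injEq] at ht
        obtain ⟨hp, hq⟩ := ht
        cases q with
        | app _ _ => simp [lift] at hq
        | lam _ => simp [lift] at hq
        | var k =>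
          simp only [lift, Lam.var.injEq] at hq
          have hk : k = 0 := by split_ifs at hq <;> omega
          subst hk
          obtain ⟨g, hg, hr⟩ := lift_eq_lift (Nat.zero_le d) hp.symm
          obtain ⟨u1, rfl, hu1⟩ := ih1 d g hr
          exact ⟨u1, rfl, by rw [hg]; exact Par.eta hu1⟩

def etaView : Lam → Option Lam
  | app f (var 0) => drop 0 f
  | _ => none

theorem etaView_some : ∀ {a g : Lam}, etaView a = some g → a = app (lift 0 g) (var 0) := by
  intro a g h
  match a with
  | var n => simp [etaView] at h
  | lam x => simp [etaView] at h
  | app f (var 0) =>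
    simp only [etaView] at h
    rw [← drop_some 0 h]
  | app f (var (k+1)) => simp [etaView] at h
  | app f (app x y) => simp [etaView] at h
  | app f (lam x) => simp [etaView] at h

theorem etaView_lift0 (g : Lam) : etaView (app (lift 0 g) (var 0)) = some g := by
  simp [etaView, drop_lift]

theorem size_etaView {a g : Lam} (h : etaView a = some g) : size g < size a := by
  rw [etaView_some h]
  simp only [size, size_lift]
  omega

def cd : Lam → Lam
  | var n => var n
  | app (lam b) s => subst 0 (cd s) (cd b)
  | app (var n) s => app (var n) (cd s)
  | app (app a b) s => app (cd (app a b)) (cd s)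
  | lam a =>
    match h : etaView a with
    | some g => cd g
    | none => lam (cd a)
termination_by t => size t
decreasing_by
  all_goals simp only [size]
  · omega
  · omega
  · omega
  · omega
  · omega
  · have := size_etaView h; omega
  · omega

theorem cd_var (n : Nat) : cd (var n) = var n := by rw [cd]
theorem cd_app_lam (b s : Lam) : cd (app (lam b) s) = subst 0 (cd s) (cd b) := by rw [cd]
theorem cd_app_var (n : Nat) (s : Lam) : cd (app (var n) s) = app (var n) (cd s) := by rw [cd]
theorem cd_app_app (a b s : Lam) : cd (app (app a b) s) = app (cd (app a b)) (cd s) := by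
  rw [cd]
theorem cd_lam_eta (g : Lam) : cd (lam (app (lift 0 g) (var 0))) = cd g := by
  rw [cd, etaView_lift0]
theorem cd_lam_none {a : Lam} (h : etaView a = none) : cd (lam a) = lam (cd a) := by
  rw [cd, h]

theorem etaView_lift (a : Lam) (d : Nat) :
    etaView (lift (d+1) a) = (etaView a).map (lift d) := by
  match a with
  | var n => simp [etaView, lift]
  | lam x => simp [etaView, lift]
  | app f (var 0) =>
    have h0 : lift (d+1) (var 0) = var 0 := by simp [lift]
    show etaView (app (lift (d+1) f) (lift (d+1) (var 0))) = _
    rw [h0]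
    show drop 0 (lift (d+1) f) = (drop 0 f).map (lift d)
    exact drop_lift_comm f d
  | app f (var (k+1)) =>
    have h0 : lift (d+1) (var (k+1)) = var (if k+1 < d+1 then k+1 else k+2) := rfl
    show etaView (app (lift (d+1) f) (lift (d+1) (var (k+1)))) = _
    rw [h0]
    split_ifs <;> simp [etaView]
  | app f (app x y) => simp [etaView, lift]
  | app f (lam x) => simp [etaView, lift]

theorem cd_lift : ∀ t d, cd (lift d t) = lift d (cd t) := by
  have H : ∀ N t, size t ≤ N → ∀ d, cd (lift d t) = lift d (cd t) := by
    intro N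
    induction N with
    | zero => intro t ht; cases t <;> simp [size] at ht
    | succ N ih =>
      intro t ht d
      match t with
      | var n => simp [cd_var, lift]
      | app (lam b) s =>
        simp only [size] at ht
        show cd (app (lam (lift (d+1) b)) (lift d s)) = _
        rw [cd_app_lam, cd_app_lam, ih s (by omega) d, ih b (by omega) (d+1),
          lift_subst_hi (cd b) d 0 (cd s) (Nat.zero_le d)]
      | app (var n) s =>
        simp only [size] at ht
        show cd (app (var (if n < d then n else n+1)) (lift d s)) = _
        rw [cd_app_var, cd_app_var, ih s (by omega) d]
        simp [lift]
      | app (app x y) s =>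
        simp only [size] at ht
        show cd (app (app (lift d x) (lift d y)) (lift d s)) = _
        rw [cd_app_app, cd_app_app, ih s (by omega) d,
          show app (lift d x) (lift d y) = lift d (app x y) from rfl,
          ih (app x y) (by simp [size]; omega) d]
        rfl
      | lam a =>
        simp only [size] at ht
        show cd (lam (lift (d+1) a)) = _
        cases hv : etaView a with
        | some g =>
          have hsz := size_etaView hv
          have hae := etaView_some hv
          subst hae
          simp only [size, size_lift] at ht hsz
          have : lift (d+1) (app (lift 0 g) (var 0)) = app (lift 0 (lift d g)) (var 0) := by
            show app (lift (d+1) (lift 0 g)) (var (if 0 < d+1 then 0 else 1)) = _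
            rw [← lift_lift g 0 d (Nat.zero_le d), if_pos (by omega)]
          rw [this, cd_lam_eta, cd_lam_eta, ih g (by omega) d]
        | none =>
          rw [cd_lam_none hv]
          have hnone : etaView (lift (d+1) a) = none := by
            rw [etaView_lift, hv]; rfl
          rw [cd_lam_none hnone, ih a (by omega) (d+1)]
          rfl
  exact fun t => H (size t) t le_rfl

theorem cd_eta_subst (r s : Lam) :
    subst 0 (cd s) (cd (app (lift 0 r) (var 0))) = cd (app r s) := by
  match r with
  | var n =>
    have h0 : lift 0 (var n) = var (n+1) := by simp [lift]
    rw [h0, cd_app_var, cd_app_var, cd_var]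
    show app (subst 0 (cd s) (var (n+1))) (subst 0 (cd s) (var 0)) = _
    simp [subst]
  | lam r' =>
    have h0 : lift 0 (lam r') = lam (lift 1 r') := rfl
    rw [h0, cd_app_lam, cd_app_lam, cd_var, cd_lift r' 1, subst_var_lift]
  | app x y =>
    have h0 : lift 0 (app x y) = app (lift 0 x) (lift 0 y) := rfl
    rw [h0, cd_app_app, cd_app_app,
      show app (lift 0 x) (lift 0 y) = lift 0 (app x y) from rfl,
      cd_lift (app x y) 0, cd_var]
    show app (subst 0 (cd s) (lift 0 (cd (app x y)))) (subst 0 (cd s) (var 0)) = _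
    rw [subst_lift_self]
    simp [subst]

theorem triangle : ∀ t u, Par t u → Par u (cd t) := by
  have H : ∀ N t, size t ≤ N → ∀ u, Par t u → Par u (cd t) := by
    intro N
    induction N with
    | zero => intro t ht; cases t <;> simp [size] at ht
    | succ N ih =>
      intro t ht u h
      cases h with
      | var n => rw [cd_var]; exact Par.var n
      | @congApp a a' b b' h1 h2 =>
        cases h1 with
        | @congLam x x' hx =>
          simp only [size] at ht
          rw [cd_app_lam]
          exact Par.beta (ih x (by omega) _ hx) (ih b (by omega) _ h2)
        | @eta r r' hr =>
          simp only [size, size_lift] at ht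
          rw [cd_app_lam, cd_eta_subst]
          exact ih (app r b) (by simp [size]; omega) _ (Par.congApp hr h2)
        | var n =>
          simp only [size] at ht
          rw [cd_app_var]
          exact Par.congApp (Par.var n) (ih b (by omega) _ h2)
        | @congApp x x' y y' hx hy =>
          simp only [size] at ht
          rw [cd_app_app]
          exact Par.congApp (ih (app x y) (by simp [size]; omega) _ (Par.congApp hx hy))
            (ih b (by omega) _ h2)
        | @beta p p' q q' hp hq =>
          simp only [size] at ht
          rw [cd_app_app]
          exact Par.congApp (ih (app (lam p) q) (by simp [size]; omega) _ (Par.beta hp hq))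
            (ih b (by omega) _ h2)
      | @beta p p' q q' hp hq =>
        simp only [size] at ht
        rw [cd_app_lam]
        exact par_subst (ih p (by omega) _ hp) 0 (ih q (by omega) _ hq)
      | @eta r r' hr =>
        simp only [size, size_lift] at ht
        rw [cd_lam_eta]
        exact ih r (by omega) _ hr
      | @congLam a a₁ ha =>
        simp only [size] at ht
        cases hv : etaView a with
        | none =>
          rw [cd_lam_none hv]
          exact Par.congLam (ih a (by omega) _ ha)
        | some g =>
          have hsz := size_etaView hv
          have hae := etaView_some hv
          subst hae
          rw [cd_lam_eta]
          simp only [size, size_lift] at ht hsz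
          generalize hf : lift 0 g = f at ha
          cases ha with
          | congApp h1 h2 =>
            cases h2
            subst hf
            obtain ⟨g₁, rfl, hg₁⟩ := par_lift_inv h1 0 g rfl
            exact Par.eta (ih g (by omega) _ hg₁)
          | @beta p p' q q' h1 h2 =>
            cases h2
            match g, hf with
            | lam g', hf =>
              have hf' : lift 1 g' = p := Lam.lam.inj hf
              rw [← hf'] at h1
              obtain ⟨g₁, rfl, hg₁⟩ := par_lift_inv h1 1 g' rfl
              rw [subst_var_lift]
              exact ih (lam g') (by simp only [size] at ht ⊢; omega) _ (Par.congLam hg₁)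
  exact fun t => H (size t) t le_rfl


/-! ### Confluence consequences -/

theorem diamond {a b c : Lam} (h1 : Par a b) (h2 : Par a c) : ∃ d, Par b d ∧ Par c d :=
  ⟨cd a, triangle _ _ h1, triangle _ _ h2⟩

abbrev Red : Lam → Lam → Prop := Relation.ReflTransGen Par

theorem joins_equiv : Equivalence (Relation.Join Red) :=
  Relation.equivalence_join_reflTransGen (fun _ _ _ h1 h2 =>
    let ⟨d, hd1, hd2⟩ := diamond h1 h2
    ⟨d, Relation.ReflGen.single hd1, Relation.ReflTransGen.single hd2⟩)

theorem red_app {a a' b b' : Lam} (h1 : Red a a') (h2 : Red b b') :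
    Red (app a b) (app a' b') :=
  Relation.ReflTransGen.trans
    (Relation.ReflTransGen.lift (fun x => app x b) (fun _ _ h => Par.congApp h (par_refl b)) _ _ h1)
    (Relation.ReflTransGen.lift (fun y => app a' y) (fun _ _ h => Par.congApp (par_refl a') h) _ _ h2)

theorem red_lam {a a' : Lam} (h1 : Red a a') : Red (lam a) (lam a') :=
  Relation.ReflTransGen.lift lam (fun _ _ h => Par.congLam h) _ _ h1

theorem betaEta_joins {t s : Lam} (h : BetaEta t s) : Relation.Join Red t s := by
  induction h with
  | beta t s =>
    exact ⟨subst 0 s t, Relation.ReflTransGen.single (Par.beta (par_refl t) (par_refl s)),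
      Relation.ReflTransGen.refl⟩
  | eta t =>
    exact ⟨t, Relation.ReflTransGen.single (Par.eta (par_refl t)), Relation.ReflTransGen.refl⟩
  | refl t => exact joins_equiv.refl t
  | symm _ ih => exact joins_equiv.symm ih
  | trans _ _ ih1 ih2 => exact joins_equiv.trans ih1 ih2
  | congApp _ _ ih1 ih2 =>
    obtain ⟨w1, hw1, hw1'⟩ := ih1
    obtain ⟨w2, hw2, hw2'⟩ := ih2
    exact ⟨app w1 w2, red_app hw1 hw2, red_app hw1' hw2'⟩
  | congLam _ ih =>
    obtain ⟨w, hw, hw'⟩ := ih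
    exact ⟨lam w, red_lam hw, red_lam hw'⟩

/-! ### Normal forms `T n` -/

def S0 : Lam := lam (app (app (var 2) (var 0)) (app (var 1) (var 0)))

def T (n : Nat) : Lam := lam (lam (npow (app (var 1) (var 0)) n S0))

theorem par_lam_inv {a u : Lam} (h : Par (lam a) u) :
    (∃ a', u = lam a' ∧ Par a a') ∨
      (∃ t, a = app (lift 0 t) (var 0) ∧ Par t u) := by
  cases h with
  | congLam h1 => exact Or.inl ⟨_, rfl, h1⟩
  | eta h1 => exact Or.inr ⟨_, rfl, h1⟩

theorem par_var_inv {n : Nat} {u : Lam} (h : Par (var n) u) : u = var n := by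
  cases h; rfl

theorem par_E_inv {u : Lam} (h : Par (app (var 1) (var 0)) u) : u = app (var 1) (var 0) := by
  cases h with
  | congApp h1 h2 => rw [par_var_inv h1, par_var_inv h2]

theorem par_S0_inv {u : Lam} (h : Par S0 u) : u = S0 := by
  unfold S0 at h ⊢
  rcases par_lam_inv h with ⟨a', rfl, h1⟩ | ⟨t, ht, -⟩
  · cases h1 with
    | congApp h2 h3 =>
      cases h2 with
      | congApp h4 h5 =>
        rw [par_var_inv h4, par_var_inv h5, par_E_inv h3]
  · exact absurd (Lam.app.inj ht).2 (by simp)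

theorem par_npow_inv {n : Nat} {u : Lam}
    (h : Par (npow (app (var 1) (var 0)) n S0) u) :
    u = npow (app (var 1) (var 0)) n S0 := by
  induction n generalizing u with
  | zero => exact par_S0_inv h
  | succ n ih =>
    cases h with
    | congApp h1 h2 => rw [par_E_inv h1, ih h2]; rfl

theorem npow_ES0_ne_eta (n : Nat) (t : Lam) :
    npow (app (var 1) (var 0)) n S0 ≠ app (lift 0 t) (var 0) := by
  intro h
  match n, h with
  | 0, h => simp [npow, S0] at h
  | n+1, h =>
    have h2 := (Lam.app.inj h).2
    match n, h2 with
    | 0, h2 => simp [npow, S0] at h2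
    | m+1, h2 => simp [npow] at h2

theorem par_T_inv {n : Nat} {u : Lam} (h : Par (T n) u) : u = T n := by
  unfold T at h ⊢
  rcases par_lam_inv h with ⟨a', rfl, h1⟩ | ⟨t, ht, -⟩
  · rcases par_lam_inv h1 with ⟨b', rfl, h2⟩ | ⟨t, ht, -⟩
    · rw [par_npow_inv h2]
    · exact absurd ht (npow_ES0_ne_eta n t)
  · simp at ht

theorem red_T_inv {n : Nat} {u : Lam} (h : Red (T n) u) : u = T n := by
  induction h with
  | refl => rfl
  | tail h1 h2 ih => rw [ih] at h2; exact par_T_inv h2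

theorem npow_ES0_inj : ∀ {a b : Nat},
    npow (app (var 1) (var 0)) a S0 = npow (app (var 1) (var 0)) b S0 → a = b := by
  intro a
  induction a with
  | zero =>
    intro b h
    cases b with
    | zero => rfl
    | succ b => simp [npow, S0] at h
  | succ a ih =>
    intro b h
    cases b with
    | zero => simp [npow, S0] at h
    | succ b => rw [ih (Lam.app.inj h).2]

theorem T_inj {a b : Nat} (h : T a = T b) : a = b := by
  unfold T at h
  exact npow_ES0_inj (Lam.lam.inj (Lam.lam.inj h))

theorem not_betaEta_T {a b : Nat} (hab : a ≠ b) : ¬ BetaEta (T a) (T b) := by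
  intro h
  obtain ⟨w, h1, h2⟩ := betaEta_joins h
  exact hab (T_inj ((red_T_inv h1).symm.trans (red_T_inv h2)))

/-! ### Part A: computing the normal forms of odd self-applications of S -/

theorem be_beta' {t s u : Lam} (h : subst 0 s t = u) : BetaEta (app (lam t) s) u :=
  h ▸ BetaEta.beta t s

theorem subst_npow (d : Nat) (s e : Lam) (n : Nat) (a : Lam) :
    subst d s (npow e n a) = npow (subst d s e) n (subst d s a) := by
  induction n with
  | zero => rfl
  | succ n ih => simp only [npow, subst, ih]

theorem lift_npow (d : Nat) (e : Lam) (n : Nat) (a : Lam) :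
    lift d (npow e n a) = npow (lift d e) n (lift d a) := by
  induction n with
  | zero => rfl
  | succ n ih => simp only [npow, lift, ih]

theorem npow_congr {e a b : Lam} (n : Nat) (h : BetaEta a b) :
    BetaEta (npow e n a) (npow e n b) := by
  induction n with
  | zero => exact h
  | succ n ih => exact BetaEta.congApp (BetaEta.refl e) ih

theorem lift_S (d : Nat) : lift d S = S := by
  show lam (lam (lam (app (app (lift (d+1+1+1) (var 2)) (lift (d+1+1+1) (var 0)))
    (app (lift (d+1+1+1) (var 1)) (lift (d+1+1+1) (var 0)))))) = S
  simp only [lift]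
  rw [if_pos (show 2 < d+1+1+1 by omega), if_pos (show 1 < d+1+1+1 by omega),
    if_pos (show 0 < d+1+1+1 by omega)]
  rfl

theorem subst_S (d : Nat) (s : Lam) : subst d s S = S := by
  show lam (lam (lam (app (app (subst (d+1+1+1) _ (var 2)) (subst (d+1+1+1) _ (var 0)))
    (app (subst (d+1+1+1) _ (var 1)) (subst (d+1+1+1) _ (var 0)))))) = S
  simp only [subst]
  rw [if_neg (show ¬(2 = d+1+1+1) by omega), if_neg (show ¬(d+1+1+1 < 2) by omega),
    if_neg (show ¬(1 = d+1+1+1) by omega), if_neg (show ¬(d+1+1+1 < 1) by omega),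
    if_neg (show ¬(0 = d+1+1+1) by omega), if_neg (show ¬(d+1+1+1 < 0) by omega)]
  rfl

theorem lift_E' {d : Nat} (hd : 2 ≤ d) :
    lift d (app (var 1) (var 0)) = app (var 1) (var 0) := by
  show app (var (if 1 < d then 1 else 2)) (var (if 0 < d then 0 else 1)) = _
  rw [if_pos (by omega), if_pos (by omega)]

theorem lift_S0' {d : Nat} (hd : 2 ≤ d) : lift d S0 = S0 := by
  show lam (app (app (var (if 2 < d+1 then 2 else 3)) (var (if 0 < d+1 then 0 else 1)))
    (app (var (if 1 < d+1 then 1 else 2)) (var (if 0 < d+1 then 0 else 1)))) = S0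
  rw [if_pos (show 2 < d+1 by omega), if_pos (show 1 < d+1 by omega),
    if_pos (show 0 < d+1 by omega)]
  rfl

theorem lift_T' (d k : Nat) : lift d (T k) = T k := by
  show lam (lam (lift (d+1+1) (npow (app (var 1) (var 0)) k S0))) = T k
  rw [lift_npow, lift_E' (by omega), lift_S0' (by omega)]
  rfl

def W : Lam := lam (lam (app (app S (var 0)) (app (var 1) (var 0))))
def V : Lam := lam (app (app S (var 0)) (app S (var 0)))
def C2 : Lam := lam (app (app (var 3) (var 0)) (app (var 1) (var 0)))
def C1 : Lam := lam (app (app S (var 0)) (app (var 1) (var 0)))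

theorem beSS : BetaEta (app S S) W := be_beta' (by decide)

theorem beS_var0 : BetaEta (app S (var 0)) (lam S0) := be_beta' (by decide)

theorem beS0_app (A : Lam) : BetaEta (app (lam S0) A)
    (lam (app (app (var 1) (var 0)) (app (lift 0 A) (var 0)))) := by
  refine be_beta' ?_
  show lam (app (app (subst 1 (lift 0 A) (var 2)) (subst 1 (lift 0 A) (var 0)))
    (app (subst 1 (lift 0 A) (var 1)) (subst 1 (lift 0 A) (var 0)))) = _
  rfl

theorem beS_var1 : BetaEta (app S (var 1)) (lam C2) := be_beta' (by decide)

theorem beC2_var0 : BetaEta (app (lam C2) (var 0)) S0 := be_beta' (by decide)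

theorem beV_T1 : BetaEta V (T 1) := by
  refine BetaEta.trans (BetaEta.congLam (BetaEta.congApp beS_var0 (BetaEta.refl _))) ?_
  refine BetaEta.trans (BetaEta.congLam (beS0_app (app S (var 0)))) ?_
  rw [show lift 0 (app S (var 0)) = app (lift 0 S) (var 1) from rfl, lift_S]
  refine BetaEta.trans (BetaEta.congLam (BetaEta.congLam
    (BetaEta.congApp (BetaEta.refl _) (BetaEta.congApp beS_var1 (BetaEta.refl _))))) ?_
  exact BetaEta.congLam (BetaEta.congLam
    (BetaEta.congApp (BetaEta.refl _) beC2_var0))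

theorem beP (k : Nat) : BetaEta (app (app S S) (T k)) (T (k + 1)) := by
  refine BetaEta.trans (BetaEta.congApp beSS (BetaEta.refl _)) ?_
  have e2 : subst 0 (T k) (lam (app (app S (var 0)) (app (var 1) (var 0)))) =
      lam (app (app S (var 0)) (app (T k) (var 0))) := by
    show lam (app (app (subst 1 (lift 0 (T k)) S) (subst 1 (lift 0 (T k)) (var 0)))
      (app (subst 1 (lift 0 (T k)) (var 1)) (subst 1 (lift 0 (T k)) (var 0)))) = _
    rw [lift_T', subst_S]
    rfl
  refine BetaEta.trans (be_beta' e2) ?_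
  refine BetaEta.trans (BetaEta.congLam (BetaEta.congApp beS_var0 (BetaEta.refl _))) ?_
  refine BetaEta.trans (BetaEta.congLam (beS0_app (app (T k) (var 0)))) ?_
  rw [show lift 0 (app (T k) (var 0)) = app (lift 0 (T k)) (var 1) from rfl, lift_T']
  have h5 : BetaEta (app (T k) (var 1)) (lam (npow (app (var 2) (var 0)) k C2)) := by
    refine be_beta' ?_
    show lam (subst 1 (var 2) (npow (app (var 1) (var 0)) k S0)) = _
    rw [subst_npow, show subst 1 (var 2) (app (var 1) (var 0)) = app (var 2) (var 0) from
      by decide, show subst 1 (var 2) S0 = C2 from by decide]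
  have h6 : BetaEta (app (lam (npow (app (var 2) (var 0)) k C2)) (var 0))
      (npow (app (var 1) (var 0)) k S0) := by
    refine be_beta' ?_
    show subst 0 (var 0) (npow (app (var 2) (var 0)) k C2) = _
    rw [subst_npow, show subst 0 (var 0) (app (var 2) (var 0)) = app (var 1) (var 0) from
      by decide, show subst 0 (var 0) C2 = S0 from by decide]
  refine BetaEta.trans (BetaEta.congLam (BetaEta.congLam
    (BetaEta.congApp (BetaEta.refl _) (BetaEta.congApp h5 (BetaEta.refl _))))) ?_
  exact BetaEta.congLam (BetaEta.congLam (BetaEta.congApp (BetaEta.refl _) h6))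

theorem beNpow (m : Nat) : BetaEta (npow (app S S) m (T 1)) (T (m + 1)) := by
  induction m with
  | zero => exact BetaEta.refl _
  | succ m ih =>
    show BetaEta (app (app S S) (npow (app S S) m (T 1))) _
    exact BetaEta.trans (BetaEta.congApp (BetaEta.refl _) ih) (beP (m+1))

theorem beK (m : Nat) : BetaEta (app (app (T m) S) S) (T (m + 1)) := by
  have h1 : BetaEta (app (T m) S) (lam (npow (app S (var 0)) m C1)) := by
    refine be_beta' ?_
    show lam (subst 1 (lift 0 S) (npow (app (var 1) (var 0)) m S0)) = _
    rw [lift_S, subst_npow, show subst 1 S (app (var 1) (var 0)) = app S (var 0) from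
      by decide, show subst 1 S S0 = C1 from by decide]
  have h2 : BetaEta (app (lam (npow (app S (var 0)) m C1)) S) (npow (app S S) m V) := by
    refine be_beta' ?_
    show subst 0 S (npow (app S (var 0)) m C1) = _
    rw [subst_npow, show subst 0 S (app S (var 0)) = app S S from by decide,
      show subst 0 S C1 = V from by decide]
  refine BetaEta.trans (BetaEta.congApp h1 (BetaEta.refl _)) ?_
  refine BetaEta.trans h2 ?_
  exact BetaEta.trans (npow_congr m beV_T1) (beNpow m)

theorem partA : ∀ n : Nat, BetaEta (sapp S (2 * (n + 1) + 1)) (T (n + 1)) := by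
  intro n
  induction n with
  | zero =>
    show BetaEta (app (app S S) S) (T 1)
    refine BetaEta.trans (BetaEta.congApp beSS (BetaEta.refl _)) ?_
    exact BetaEta.trans (be_beta' (u := V) (by decide)) beV_T1
  | succ n ih =>
    have e1 : sapp S (2 * (n + 1 + 1) + 1) = app (app (sapp S (2 * (n + 1) + 1)) S) S := by
      have h : 2 * (n + 1 + 1) + 1 = (2 * (n + 1) + 1) + 2 := by ring
      rw [h]
      rfl
    rw [e1]
    exact BetaEta.trans
      (BetaEta.congApp (BetaEta.congApp ih (BetaEta.refl S)) (BetaEta.refl S)) (beK (n+1))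

/-! ### Part B: assembling -/

theorem sapp_succ {k : Nat} (hk : 1 ≤ k) : sapp S (k + 1) = app (sapp S k) S := by
  match k, hk with
  | k + 1, _ => rfl

theorem be_ext {i j : Nat} (hi : 1 ≤ i) (h : BetaEta (sapp S i) (sapp S (i + j))) :
    ∀ m, BetaEta (sapp S (i + m)) (sapp S (i + j + m)) := by
  intro m
  induction m with
  | zero => exact h
  | succ m ih =>
    rw [show i + (m+1) = (i+m) + 1 from rfl, show i + j + (m+1) = (i+j+m) + 1 from rfl,
      sapp_succ (by omega), sapp_succ (by omega)]
    exact BetaEta.congApp ih (BetaEta.refl S)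

theorem S_no_rho :
    (∀ n : Nat, 1 ≤ n →
      BetaEta (sapp S (2 * n + 1))
        (lam (lam (npow (app (var 1) (var 0)) n
          (lam (app (app (var 2) (var 0)) (app (var 1) (var 0)))))))) ∧
    (∀ i j : Nat, 1 ≤ i → 1 ≤ j → ¬ BetaEta (sapp S i) (sapp S (i + j))) := by
  have hA : ∀ n : Nat, 1 ≤ n → BetaEta (sapp S (2 * n + 1)) (T n) := by
    intro n hn
    match n, hn with
    | n + 1, _ => exact partA n
  constructor
  · exact fun n hn => hA n hn
  · intro i j hi hj h
    obtain ⟨j2, hj2pos, hj2even, h2⟩ :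
        ∃ j2, 1 ≤ j2 ∧ j2 % 2 = 0 ∧ BetaEta (sapp S i) (sapp S (i + j2)) := by
      by_cases hp : j % 2 = 0
      · exact ⟨j, hj, hp, h⟩
      · refine ⟨j + j, by omega, by omega, ?_⟩
        have h3 := be_ext hi h j
        rw [show i + j + j = i + (j + j) by ring] at h3
        exact BetaEta.trans h h3
    set m := if i % 2 = 0 then 1 else 2 with hm
    have hoddm : (i + m) % 2 = 1 ∧ 3 ≤ i + m := by
      by_cases hi2 : i % 2 = 0 <;> simp only [hm, hi2, if_true, if_false] <;> omega
    have h4 := be_ext hi h2 m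
    obtain ⟨a, ha, haeq⟩ : ∃ a, 1 ≤ a ∧ i + m = 2 * a + 1 :=
      ⟨(i + m - 1) / 2, by omega, by omega⟩
    obtain ⟨b, hb, hbeq⟩ : ∃ b, 1 ≤ b ∧ i + j2 + m = 2 * b + 1 :=
      ⟨(i + j2 + m - 1) / 2, by omega, by omega⟩
    have hab : a ≠ b := by omega
    rw [haeq, show i + j2 + m = i + m + j2 by ring] at h4
    rw [show i + m + j2 = 2 * b + 1 by omega] at h4
    exact not_betaEta_T hab
      (BetaEta.trans (BetaEta.symm (hA a ha)) (BetaEta.trans h4 (hA b hb)))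

end Lam
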